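/- Let X be a compact metric space, f : X → X continuous, and x, y ∈ X. Suppose (q_i) is a strictly increasing sequence of positive integers with bounded gaps: there exists M > 0 with q_{i+1} - q_i ≤ M for all i. If the lower density of times i < n with d(f^i(x), f^i(y)) < ε is zero for some ε > 0 (i.e., liminf_{n→∞} (1/n)#{0 ≤ i < n : d(f^i x, f^i y) < ε} = 0), then liminf_{n→∞} (1/n)#{0 ≤ i < n : d(f^{q_i} x, f^{q_i} y) < ε} = 0. -/

import Mathlib

open Filter Set
open scoped Classical

/-- Lower density of times `i < n` with `dist (f^[i] x) (f^[i] y) < t`. -/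
noncomputable def ldens {X : Type*} [MetricSpace X] (f : X → X) (x y : X) (t : ℝ) : ℝ :=
  Filter.liminf (fun n : ℕ =>
    (((Finset.range n).filter (fun i => dist (f^[i] x) (f^[i] y) < t)).card : ℝ) / n)
    Filter.atTop

/-- Upper density of times `i < n` with `dist (f^[i] x) (f^[i] y) < t`. -/
noncomputable def udens {X : Type*} [MetricSpace X] (f : X → X) (x y : X) (t : ℝ) : ℝ :=
  Filter.limsup (fun n : ℕ =>
    (((Finset.range n).filter (fun i => dist (f^[i] x) (f^[i] y) < t)).card : ℝ) / n)
    Filter.atTop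

/-- Lower density along the sequence of times `q i`. -/
noncomputable def ldensSeq {X : Type*} [MetricSpace X] (f : X → X) (q : ℕ → ℕ)
    (x y : X) (t : ℝ) : ℝ :=
  Filter.liminf (fun n : ℕ =>
    (((Finset.range n).filter (fun i => dist (f^[q i] x) (f^[q i] y) < t)).card : ℝ) / n)
    Filter.atTop

/-- Upper density along the sequence of times `q i`. -/
noncomputable def udensSeq {X : Type*} [MetricSpace X] (f : X → X) (q : ℕ → ℕ)
    (x y : X) (t : ℝ) : ℝ :=
  Filter.limsup (fun n : ℕ =>
    (((Finset.range n).filter (fun i => dist (f^[q i] x) (f^[q i] y) < t)).card : ℝ) / n)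
    Filter.atTop

lemma aux_q_le (q : ℕ → ℕ) (hq : StrictMono q) (M : ℕ)
    (hgap : ∀ i, q (i + 1) - q i ≤ M) : ∀ i, q i ≤ q 0 + i * M := by
  intro i
  induction i with
  | zero => simp
  | succ i ih =>
    have h1 := hgap i
    have h2 : q i ≤ q (i+1) := (hq (Nat.lt_succ_self i)).le
    have h3 : q (i+1) ≤ q i + M := by omega
    calc q (i+1) ≤ q i + M := h3
      _ ≤ q 0 + i * M + M := by omega
      _ = q 0 + (i+1) * M := by ring

lemma aux_count_seq (P : ℕ → Prop) (q : ℕ → ℕ) (hq : StrictMono q) (M : ℕ) (hM : 0 < M)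
    (hle : ∀ i, q i ≤ q 0 + i * M) (n : ℕ) :
    ((Finset.range n).filter (fun i => P (q i))).card ≤
      ((Finset.range (q 0 + n * M)).filter P).card := by
  apply Finset.card_le_card_of_injOn q
  · intro i hi
    rw [Finset.mem_coe, Finset.mem_filter, Finset.mem_range] at hi ⊢
    refine ⟨?_, hi.2⟩
    have h1 : q i ≤ q 0 + i * M := hle i
    have h2 : i * M < n * M := (Nat.mul_lt_mul_right hM).mpr hi.1
    omega
  · exact fun a _ b _ hab => hq.injective hab

lemma aux_count_mono (P : ℕ → Prop) (m m' : ℕ) (h : m ≤ m') :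
    ((Finset.range m').filter P).card ≤ ((Finset.range m).filter P).card + (m' - m) := by
  have hsub : (Finset.range m').filter P ⊆ ((Finset.range m).filter P) ∪ Finset.Ico m m' := by
    intro j hj
    rw [Finset.mem_filter, Finset.mem_range] at hj
    rw [Finset.mem_union, Finset.mem_filter, Finset.mem_range, Finset.mem_Ico]
    by_cases hjm : j < m
    · exact Or.inl ⟨hjm, hj.2⟩
    · exact Or.inr ⟨by omega, hj.1⟩
  calc ((Finset.range m').filter P).card
      ≤ (((Finset.range m).filter P) ∪ Finset.Ico m m').card := Finset.card_le_card hsub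
    _ ≤ ((Finset.range m).filter P).card + (Finset.Ico m m').card := Finset.card_union_le _ _
    _ = ((Finset.range m).filter P).card + (m' - m) := by rw [Nat.card_Ico]

theorem stmt_0 {X : Type*} [MetricSpace X] [CompactSpace X]
    (f : X → X) (hf : Continuous f) (x y : X)
    (q : ℕ → ℕ) (hq : StrictMono q) (hqpos : ∀ i, 0 < q i)
    (M : ℕ) (hM : 0 < M) (hgap : ∀ i, q (i + 1) - q i ≤ M)
    (ε : ℝ) (hε : 0 < ε) (h : ldens f x y ε = 0) :
    ldensSeq f q x y ε = 0 := by
  set P : ℕ → Prop := fun j => dist (f^[j] x) (f^[j] y) < ε with hP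
  set c : ℕ → ℕ := fun m => ((Finset.range m).filter P).card with hc
  set a : ℕ → ℝ := fun m => (c m : ℝ) / m with ha
  set b : ℕ → ℝ := fun n =>
    (((Finset.range n).filter (fun i => P (q i))).card : ℝ) / n with hb
  have hliminfa : Filter.liminf a Filter.atTop = 0 := h
  have hgoal : ldensSeq f q x y ε = Filter.liminf b Filter.atTop := rfl
  rw [hgoal]
  have hb_nonneg : ∀ n, 0 ≤ b n := fun n => by positivity
  have hb_le_one : ∀ n, b n ≤ 1 := by
    intro n
    rcases Nat.eq_zero_or_pos n with h0 | h0
    · simp [hb, h0]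
    · rw [hb]
      rw [div_le_one (by exact_mod_cast h0)]
      exact_mod_cast (Finset.card_filter_le _ _).trans_eq (Finset.card_range n)
  have ha_nonneg : ∀ m, 0 ≤ a m := fun m => by positivity
  have ha_le_one : ∀ m, a m ≤ 1 := by
    intro m
    rcases Nat.eq_zero_or_pos m with h0 | h0
    · simp [ha, hc, h0]
    · rw [ha]
      rw [div_le_one (by exact_mod_cast h0)]
      exact_mod_cast (Finset.card_filter_le _ _).trans_eq (Finset.card_range m)
  have hbdd_below : Filter.IsBoundedUnder (· ≥ ·) Filter.atTop b :=
    Filter.isBoundedUnder_of ⟨0, fun n => hb_nonneg n⟩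
  have hbdd_above : Filter.IsBoundedUnder (· ≤ ·) Filter.atTop b :=
    Filter.isBoundedUnder_of ⟨1, fun n => hb_le_one n⟩
  have habove : Filter.IsBoundedUnder (· ≤ ·) Filter.atTop a :=
    Filter.isBoundedUnder_of ⟨1, fun m => ha_le_one m⟩
  have hacob : Filter.IsCoboundedUnder (· ≥ ·) Filter.atTop a :=
    habove.isCoboundedUnder_ge
  have hle : Filter.liminf b Filter.atTop ≤ 0 := by
    apply le_of_forall_pos_le_add
    intro δ hδ
    rw [zero_add]
    apply Filter.liminf_le_of_frequently_le _ hbdd_below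
    rw [Filter.frequently_atTop]
    intro N
    set δ' : ℝ := δ / (4 * M) with hδ'
    have hMR : (0:ℝ) < M := by exact_mod_cast hM
    have hδ'pos : 0 < δ' := by positivity
    have hδ'eq : δ' * (4 * M) = δ := div_mul_cancel₀ δ (by positivity)
    have hfreq : ∃ᶠ m in Filter.atTop, a m < δ' :=
      Filter.frequently_lt_of_liminf_lt hacob (by rw [hliminfa]; exact hδ'pos)
    set K : ℕ := max (q 0 + N * M + 1) (max (2 * q 0) ⌈(4 * (M:ℝ)^2) / δ⌉₊) with hK
    obtain ⟨m, ham, hmK⟩ := (hfreq.and_eventually (Filter.eventually_ge_atTop K)).exists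
    have hmq0 : q 0 + N * M + 1 ≤ m := le_trans (le_max_left _ _) hmK
    have hm2q0 : 2 * q 0 ≤ m := le_trans ((le_max_left _ _).trans (le_max_right _ _)) hmK
    have hmceil : (4 * (M:ℝ)^2) / δ ≤ m := by
      have h1 : (⌈(4 * (M:ℝ)^2) / δ⌉₊ : ℝ) ≤ m := by
        exact_mod_cast le_trans ((le_max_right _ _).trans (le_max_right _ _)) hmK
      exact le_trans (Nat.le_ceil _) h1
    have hmpos : 0 < m := by omega
    have hmR : (0:ℝ) < m := by exact_mod_cast hmpos
    set n : ℕ := (m - q 0) / M + 1 with hn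
    have hdm := Nat.div_add_mod (m - q 0) M
    have hmod : (m - q 0) % M < M := Nat.mod_lt _ hM
    have hnMeq : n * M = ((m - q 0) / M) * M + M := by ring
    have hcm : M * ((m - q 0) / M) = ((m - q 0) / M) * M := Nat.mul_comm _ _
    have hnM1 : m ≤ q 0 + n * M := by omega
    have hnM2 : m - q 0 < n * M := by omega
    have hnN : N ≤ n := by
      have h1 : N ≤ (m - q 0) / M := (Nat.le_div_iff_mul_le hM).mpr (by omega)
      omega
    refine ⟨n, hnN, ?_⟩
    have hnpos : 0 < n := hn ▸ Nat.succ_pos _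
    have hnR : (0:ℝ) < n := by exact_mod_cast hnpos
    -- counting chain
    have hle1 := aux_count_seq P q hq M hM (aux_q_le q hq M hgap) n
    have hle2 := aux_count_mono P m (q 0 + n * M) hnM1
    have hdiff : (q 0 + n * M) - m ≤ M := by
      have h2 : ((m - q 0) / M) * M ≤ m - q 0 := Nat.div_mul_le_self _ _
      omega
    have hcount : ((Finset.range n).filter (fun i => P (q i))).card ≤ c m + M := by
      calc ((Finset.range n).filter (fun i => P (q i))).card
          ≤ c (q 0 + n * M) := hle1
        _ ≤ c m + ((q 0 + n * M) - m) := hle2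
        _ ≤ c m + M := by omega
    clear hn hnMeq hcm hdm hmod hdiff hle1 hle2
    clear_value n
    -- real estimates
    have hnreal : (m : ℝ) ≤ n * (2 * M) := by
      have h1 : ((m - q 0 : ℕ) : ℝ) < (n : ℝ) * M := by exact_mod_cast hnM2
      have h3 : ((m - q 0 : ℕ) : ℝ) = (m : ℝ) - q 0 := by
        have hq0m : q 0 ≤ m := by omega
        exact Nat.cast_sub hq0m
      have h2 : (2 * (q 0 : ℝ)) ≤ m := by exact_mod_cast hm2q0
      rw [h3] at h1
      linarith
    have hbn : b n ≤ ((c m : ℝ) + M) / n := by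
      have hb' : b n = (((Finset.range n).filter (fun i => P (q i))).card : ℝ) / n := rfl
      rw [hb']
      gcongr
      exact_mod_cast hcount
    have hAm : (c m : ℝ) < δ' * m := by
      have h1 : (c m : ℝ) / m < δ' := ham
      rwa [div_lt_iff₀ hmR] at h1
    have h4 : 4 * (M:ℝ)^2 ≤ δ * m := by
      rw [div_le_iff₀ hδ] at hmceil
      linarith
    have hstep : ((c m : ℝ) + M) / n ≤ δ := by
      rw [div_le_iff₀ hnR]
      have hA2 : 2 * (M:ℝ) * (c m) ≤ δ * m / 2 := by
        have h1 := mul_lt_mul_of_pos_left hAm (show (0:ℝ) < 2 * M by positivity)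
        have heq : 2 * (M:ℝ) * (δ' * m) = δ * m / 2 := by rw [← hδ'eq]; ring
        linarith
      have hA4 : 2 * (M:ℝ) * M ≤ δ * m / 2 := by nlinarith [h4]
      have h5 : ((c m : ℝ) + M) * (2 * M) ≤ δ * m := by nlinarith [hA2, hA4]
      have h6 : δ * (m:ℝ) ≤ δ * n * (2 * M) := by
        have := mul_le_mul_of_nonneg_left hnreal hδ.le
        linarith [this]
      have h7 : ((c m : ℝ) + M) * (2 * M) ≤ δ * n * (2 * M) := h5.trans h6
      exact le_of_mul_le_mul_right h7 (by positivity)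
    linarith [hbn, hstep]
  have hge : 0 ≤ Filter.liminf b Filter.atTop := by
    apply Filter.le_liminf_of_le hbdd_above.isCoboundedUnder_ge
    exact Filter.Eventually.of_forall hb_nonneg
  linarith
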